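/- arXiv:2605.23608 — 2 statements merged into one kernel-verified Lean document; each statement's English description precedes it below -/
import Mathlib

section
/- Assume the Kalman condition holds and that R₃(τ) is invertible for every τ ∈ (0,T]. Then there exists ε ∈ (0,T] such that R₁(τ) is invertible for all τ ∈ [0,ε]; moreover the matrix W(τ) := R₃(τ)R₁(τ)⁻¹ is symmetric for every τ ∈ [0,ε], and W(τ) is positive definite for every τ ∈ (0,ε]. -/
open Matrix MeasureTheory Filter Topology

noncomputable section

namespace LQ

variable {n m : ℕ}

def Om (n : ℕ) : Matrix (Fin n ⊕ Fin n) (Fin n ⊕ Fin n) ℝ :=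
  Matrix.fromBlocks 0 1 (-1) 0

def Ham (A Q : Matrix (Fin n) (Fin n) ℝ) (B : Matrix (Fin n) (Fin m) ℝ) :
    Matrix (Fin n ⊕ Fin n) (Fin n ⊕ Fin n) ℝ :=
  Matrix.fromBlocks (B * Bᵀ) A Aᵀ Q

def flow (A Q : Matrix (Fin n) (Fin n) ℝ) (B : Matrix (Fin n) (Fin m) ℝ) (τ : ℝ) :
    Matrix (Fin n ⊕ Fin n) (Fin n ⊕ Fin n) ℝ :=
  NormedSpace.exp ((-τ) • (Om n * Ham A Q B))

def R1 (A Q : Matrix (Fin n) (Fin n) ℝ) (B : Matrix (Fin n) (Fin m) ℝ) (τ : ℝ) :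
    Matrix (Fin n) (Fin n) ℝ := (flow A Q B τ).toBlocks₁₁

def R2 (A Q : Matrix (Fin n) (Fin n) ℝ) (B : Matrix (Fin n) (Fin m) ℝ) (τ : ℝ) :
    Matrix (Fin n) (Fin n) ℝ := (flow A Q B τ).toBlocks₁₂

def R3 (A Q : Matrix (Fin n) (Fin n) ℝ) (B : Matrix (Fin n) (Fin m) ℝ) (τ : ℝ) :
    Matrix (Fin n) (Fin n) ℝ := (flow A Q B τ).toBlocks₂₁

def R4 (A Q : Matrix (Fin n) (Fin n) ℝ) (B : Matrix (Fin n) (Fin m) ℝ) (τ : ℝ) :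
    Matrix (Fin n) (Fin n) ℝ := (flow A Q B τ).toBlocks₂₂

def Kalman (A : Matrix (Fin n) (Fin n) ℝ) (B : Matrix (Fin n) (Fin m) ℝ) : Prop :=
  Submodule.span ℝ
    {v : Fin n → ℝ | ∃ j : Fin n, ∃ i : Fin m, v = (A ^ (j : ℕ)).mulVec (Bᵀ i)} = ⊤


/-! ### Auxiliary material -/

section MatAnalysis
attribute [local instance] Matrix.linftyOpNormedAddCommGroup Matrix.linftyOpNormedRing
  Matrix.linftyOpNormedAlgebra

variable {ι κ : Type*} [Fintype ι] [DecidableEq ι] [Fintype κ] [DecidableEq κ]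

/-- `mulVec` as a continuous linear map in the matrix argument. -/
def mvL : Matrix ι κ ℝ →L[ℝ] ((κ → ℝ) →L[ℝ] (ι → ℝ)) :=
  LinearMap.toContinuousLinearMap
    ((LinearMap.toContinuousLinearMap :
        ((κ → ℝ) →ₗ[ℝ] (ι → ℝ)) ≃ₗ[ℝ] ((κ → ℝ) →L[ℝ] (ι → ℝ))).toLinearMap.comp
      Matrix.toLin'.toLinearMap)

@[simp] lemma mvL_apply (M : Matrix ι κ ℝ) (v : κ → ℝ) : mvL M v = M.mulVec v := by
  simp [mvL, Matrix.toLin'_apply]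

lemma hasDerivAt_exp_mulVec (N : Matrix ι ι ℝ) {c : ℝ → ι → ℝ} {c' : ι → ℝ} {t : ℝ}
    (hc : HasDerivAt c c' t) :
    HasDerivAt (fun s => (NormedSpace.exp (s • N)).mulVec (c s))
      (N.mulVec ((NormedSpace.exp (t • N)).mulVec (c t))
        + (NormedSpace.exp (t • N)).mulVec c') t := by
  have h1 := mvL.hasFDerivAt.comp_hasDerivAt t (hasDerivAt_exp_smul_const' N t)
  have h2 := h1.clm_apply hc
  refine h2.congr_deriv ?_
  exact congrArg₂ (· + ·) ((mvL_apply _ _).trans (Matrix.mulVec_mulVec _ _ _).symm) (mvL_apply _ _)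

lemma continuous_exp_smul (N : Matrix ι ι ℝ) :
    Continuous fun s : ℝ => NormedSpace.exp (s • N) :=
  NormedSpace.exp_continuous.comp (continuous_id.smul continuous_const)

lemma continuous_norm_mvl_exp (N : Matrix ι ι ℝ) :
    Continuous fun s : ℝ => ‖mvL (NormedSpace.exp (s • N))‖ :=
  (mvL.continuous.comp (continuous_exp_smul N)).norm

end MatAnalysis

/-- The generator of the flow. -/
def Mm (A Q : Matrix (Fin n) (Fin n) ℝ) (B : Matrix (Fin n) (Fin m) ℝ) :
    Matrix (Fin n ⊕ Fin n) (Fin n ⊕ Fin n) ℝ :=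
  Matrix.fromBlocks (-Aᵀ) (-Q) (B * Bᵀ) A

lemma Mm_eq (A Q : Matrix (Fin n) (Fin n) ℝ) (B : Matrix (Fin n) (Fin m) ℝ) :
    Mm A Q B = -(Om n * Ham A Q B) := by
  simp [Mm, Om, Ham, Matrix.fromBlocks_multiply, Matrix.fromBlocks_neg]

lemma flow_eq (A Q : Matrix (Fin n) (Fin n) ℝ) (B : Matrix (Fin n) (Fin m) ℝ) (τ : ℝ) :
    flow A Q B τ = NormedSpace.exp (τ • Mm A Q B) := by
  rw [flow, Mm_eq, smul_neg, ← neg_smul]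

lemma flow_zero (A Q : Matrix (Fin n) (Fin n) ℝ) (B : Matrix (Fin n) (Fin m) ℝ) :
    flow A Q B 0 = 1 := by
  rw [flow_eq, zero_smul, NormedSpace.exp_zero]

lemma R1_zero (A Q : Matrix (Fin n) (Fin n) ℝ) (B : Matrix (Fin n) (Fin m) ℝ) :
    R1 A Q B 0 = 1 := by
  simp [R1, flow_zero, Matrix.toBlocks₁₁, Matrix.one_apply]
  rfl

lemma Om_mul_Om : Om n * Om n = -1 := by
  simp [Om, Matrix.fromBlocks_multiply, ← Matrix.fromBlocks_one, Matrix.fromBlocks_neg]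

lemma Om_mul_neg_Om : Om n * -Om n = 1 := by
  rw [Matrix.mul_neg, Om_mul_Om, neg_neg]

lemma neg_Om_mul_Om : -Om n * Om n = (1 : Matrix (Fin n ⊕ Fin n) (Fin n ⊕ Fin n) ℝ) := by
  rw [neg_mul, Om_mul_Om, neg_neg]

lemma isUnit_Om : IsUnit (Om n) := ⟨⟨Om n, -Om n, Om_mul_neg_Om, neg_Om_mul_Om⟩, rfl⟩

lemma Om_inv : (Om n)⁻¹ = -Om n := Matrix.inv_eq_right_inv Om_mul_neg_Om

lemma Om_transpose : (Om n)ᵀ = -Om n := by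
  simp [Om, Matrix.fromBlocks_transpose, Matrix.fromBlocks_neg]

lemma Ham_transpose (A Q : Matrix (Fin n) (Fin n) ℝ) (B : Matrix (Fin n) (Fin m) ℝ)
    (hQ : Q.IsSymm) : (Ham A Q B)ᵀ = Ham A Q B := by
  simp [Ham, Matrix.fromBlocks_transpose, Matrix.transpose_mul, hQ.eq]

lemma Mm_transpose (A Q : Matrix (Fin n) (Fin n) ℝ) (B : Matrix (Fin n) (Fin m) ℝ)
    (hQ : Q.IsSymm) : (Mm A Q B)ᵀ = Ham A Q B * Om n := by
  rw [Mm_eq, Matrix.transpose_neg, Matrix.transpose_mul, Om_transpose,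
    Ham_transpose A Q B hQ, Matrix.mul_neg, neg_neg]

lemma symplectic (A Q : Matrix (Fin n) (Fin n) ℝ) (B : Matrix (Fin n) (Fin m) ℝ)
    (hQ : Q.IsSymm) (τ : ℝ) :
    (flow A Q B τ)ᵀ * Om n * flow A Q B τ = Om n := by
  have hconj : Ham A Q B * Om n = Om n * -(Mm A Q B) * (Om n)⁻¹ := by
    rw [Om_inv, Mm_eq, neg_neg, ← mul_assoc, Om_mul_Om, mul_neg, neg_one_mul, neg_mul, neg_neg]
  have h1 : (flow A Q B τ)ᵀ = Om n * NormedSpace.exp (-(τ • Mm A Q B)) * (Om n)⁻¹ := by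
    rw [flow_eq, ← Matrix.exp_transpose, Matrix.transpose_smul, Mm_transpose A Q B hQ,
      ← Matrix.exp_conj (Om n) (-(τ • Mm A Q B)) isUnit_Om]
    congr 1
    rw [hconj, ← smul_neg, Matrix.mul_smul, Matrix.smul_mul]
  rw [h1, flow_eq]
  have h2 : (Om n)⁻¹ * Om n = 1 := by rw [Om_inv, neg_Om_mul_Om]
  have h3 : NormedSpace.exp (-(τ • Mm A Q B)) * NormedSpace.exp (τ • Mm A Q B) = 1 := by
    rw [← Matrix.exp_add_of_commute _ _ ((Commute.refl (τ • Mm A Q B)).neg_left), neg_add_cancel,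
      NormedSpace.exp_zero]
  rw [mul_assoc (Om n * NormedSpace.exp (-(τ • Mm A Q B))) ((Om n)⁻¹) (Om n), h2, mul_one,
    mul_assoc, h3, mul_one]

lemma key_identity (A Q : Matrix (Fin n) (Fin n) ℝ) (B : Matrix (Fin n) (Fin m) ℝ)
    (hQ : Q.IsSymm) (τ : ℝ) :
    (R1 A Q B τ)ᵀ * R3 A Q B τ = (R3 A Q B τ)ᵀ * R1 A Q B τ := by
  have hs := symplectic A Q B hQ τ
  set S := flow A Q B τ with hSdef
  have hS : S = Matrix.fromBlocks S.toBlocks₁₁ S.toBlocks₁₂ S.toBlocks₂₁ S.toBlocks₂₂ :=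
    (Matrix.fromBlocks_toBlocks S).symm
  rw [Om] at hs
  rw [hS] at hs
  have h11 := congrArg Matrix.toBlocks₁₁ hs
  simp [Matrix.fromBlocks_transpose, Matrix.fromBlocks_multiply] at h11
  have h2 := neg_eq_of_add_eq_zero_left h11
  exact neg_inj.mp h2

lemma symm_of_key (P R : Matrix (Fin n) (Fin n) ℝ) (h : Pᵀ * R = Rᵀ * P)
    (hu : IsUnit P.det) : (R * P⁻¹).IsSymm := by
  have hP : IsUnit Pᵀ.det := by rwa [Matrix.det_transpose]
  unfold Matrix.IsSymm
  rw [Matrix.transpose_mul, Matrix.transpose_nonsing_inv]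
  have hR : Rᵀ = Pᵀ * (R * P⁻¹) := by
    rw [← Matrix.mul_assoc, h, Matrix.mul_assoc, Matrix.mul_nonsing_inv _ hu, Matrix.mul_one]
  rw [hR, ← Matrix.mul_assoc, Matrix.nonsing_inv_mul _ hP, Matrix.one_mul]

lemma quad_congr (P R : Matrix (Fin n) (Fin n) ℝ) (hu : IsUnit P.det) (x : Fin n → ℝ) :
    x ⬝ᵥ (R * P⁻¹).mulVec x = (P⁻¹.mulVec x) ⬝ᵥ (Pᵀ * R).mulVec (P⁻¹.mulVec x) := by
  set y := P⁻¹.mulVec x with hy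
  have hx : x = P.mulVec y := by
    rw [hy, Matrix.mulVec_mulVec, Matrix.mul_nonsing_inv _ hu, Matrix.one_mulVec]
  calc x ⬝ᵥ (R * P⁻¹).mulVec x = (P.mulVec y) ⬝ᵥ R.mulVec y := by
        rw [← Matrix.mulVec_mulVec, ← hy, ← hx]
    _ = y ⬝ᵥ (Pᵀ * R).mulVec y := by
        rw [← Matrix.mulVec_mulVec, Matrix.dotProduct_mulVec y, Matrix.vecMul_transpose,
          Matrix.dotProduct_mulVec]

section Dynamics

variable (A Q : Matrix (Fin n) (Fin n) ℝ) (B : Matrix (Fin n) (Fin m) ℝ) (x : Fin n → ℝ)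

/-- state part of the Hamiltonian trajectory (costate/state pair). -/
def pv (s : ℝ) : Fin n → ℝ := fun i => (flow A Q B s).mulVec (Sum.elim x 0) (Sum.inl i)

def qv (s : ℝ) : Fin n → ℝ := fun i => (flow A Q B s).mulVec (Sum.elim x 0) (Sum.inr i)

lemma elim_pq (s : ℝ) :
    (flow A Q B s).mulVec (Sum.elim x 0) = Sum.elim (pv A Q B x s) (qv A Q B x s) :=
  funext fun i => by cases i <;> rfl

lemma pv_zero : pv A Q B x 0 = x := by
  funext i; simp [pv, flow_zero, Matrix.one_mulVec]

lemma qv_zero : qv A Q B x 0 = 0 := by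
  funext i; simp [qv, flow_zero, Matrix.one_mulVec]

lemma pv_eq (s : ℝ) : pv A Q B x s = (R1 A Q B s).mulVec x := by
  funext i
  rw [pv, ← Matrix.fromBlocks_toBlocks (flow A Q B s), Matrix.fromBlocks_mulVec]
  simp [Matrix.mulVec_zero, R1]

lemma qv_eq (s : ℝ) : qv A Q B x s = (R3 A Q B s).mulVec x := by
  funext i
  rw [qv, ← Matrix.fromBlocks_toBlocks (flow A Q B s), Matrix.fromBlocks_mulVec]
  simp [Matrix.mulVec_zero, R3]

lemma Mm_mulVec (p q : Fin n → ℝ) :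
    (Mm A Q B).mulVec (Sum.elim p q)
      = Sum.elim (-(Aᵀ.mulVec p) - Q.mulVec q) ((B * Bᵀ).mulVec p + A.mulVec q) := by
  rw [Mm, Matrix.fromBlocks_mulVec]
  congr 1
  simp [Matrix.neg_mulVec, sub_eq_add_neg]

lemma hasDerivAt_u (t : ℝ) :
    HasDerivAt (fun s => (flow A Q B s).mulVec (Sum.elim x 0))
      ((Mm A Q B).mulVec ((flow A Q B t).mulVec (Sum.elim x 0))) t := by
  have h := hasDerivAt_exp_mulVec (Mm A Q B) (hasDerivAt_const t (Sum.elim x 0))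
  simp only [← flow_eq] at h
  simpa using h

/-- restriction to `inl` coordinates as a CLM -/
def inlL : ((Fin n ⊕ Fin n) → ℝ) →L[ℝ] (Fin n → ℝ) :=
  LinearMap.toContinuousLinearMap (LinearMap.funLeft ℝ ℝ Sum.inl)

def inrL : ((Fin n ⊕ Fin n) → ℝ) →L[ℝ] (Fin n → ℝ) :=
  LinearMap.toContinuousLinearMap (LinearMap.funLeft ℝ ℝ Sum.inr)

lemma hasDerivAt_pv (t : ℝ) :
    HasDerivAt (pv A Q B x)
      (-(Aᵀ.mulVec (pv A Q B x t)) - Q.mulVec (qv A Q B x t)) t := by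
  have h := inlL.hasFDerivAt.comp_hasDerivAt t (hasDerivAt_u A Q B x t)
  have h2 : HasDerivAt (pv A Q B x)
      (inlL ((Mm A Q B).mulVec ((flow A Q B t).mulVec (Sum.elim x 0)))) t := h
  rw [elim_pq, Mm_mulVec] at h2
  exact h2

lemma hasDerivAt_qv (t : ℝ) :
    HasDerivAt (qv A Q B x)
      ((B * Bᵀ).mulVec (pv A Q B x t) + A.mulVec (qv A Q B x t)) t := by
  have h := inrL.hasFDerivAt.comp_hasDerivAt t (hasDerivAt_u A Q B x t)
  have h2 : HasDerivAt (qv A Q B x)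
      (inrL ((Mm A Q B).mulVec ((flow A Q B t).mulVec (Sum.elim x 0)))) t := h
  rw [elim_pq, Mm_mulVec] at h2
  exact h2

lemma continuous_pv : Continuous (pv A Q B x) :=
  continuous_iff_continuousAt.2 fun t => (hasDerivAt_pv A Q B x t).continuousAt

lemma continuous_qv : Continuous (qv A Q B x) :=
  continuous_iff_continuousAt.2 fun t => (hasDerivAt_qv A Q B x t).continuousAt

/-- the control-term `Bᵀ p`. -/
def ff (s : ℝ) : Fin m → ℝ := Bᵀ.mulVec (pv A Q B x s)

lemma continuous_ff : Continuous (ff A Q B x) := by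
  have : Continuous fun s => mvL Bᵀ (pv A Q B x s) :=
    (mvL Bᵀ).continuous.comp (continuous_pv A Q B x)
  simp only [mvL_apply] at this
  exact this

def phiF (s : ℝ) : ℝ := pv A Q B x s ⬝ᵥ qv A Q B x s

def psiF (s : ℝ) : ℝ :=
  ff A Q B x s ⬝ᵥ ff A Q B x s - qv A Q B x s ⬝ᵥ Q.mulVec (qv A Q B x s)

lemma dot_identity (p q : Fin n → ℝ) :
    (-(Aᵀ.mulVec p) - Q.mulVec q) ⬝ᵥ q + p ⬝ᵥ ((B * Bᵀ).mulVec p + A.mulVec q)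
      = (Bᵀ.mulVec p) ⬝ᵥ (Bᵀ.mulVec p) - q ⬝ᵥ Q.mulVec q := by
  rw [sub_dotProduct, neg_dotProduct, dotProduct_add,
    Matrix.mulVec_transpose, Matrix.dotProduct_mulVec p A q,
    ← Matrix.mulVec_mulVec, Matrix.dotProduct_mulVec p B, dotProduct_comm (Q.mulVec q) q,
    Matrix.mulVec_transpose]
  ring

lemma hasDerivAt_phiF (t : ℝ) : HasDerivAt (phiF A Q B x) (psiF A Q B x t) t := by
  have hp := hasDerivAt_pv A Q B x t
  have hq := hasDerivAt_qv A Q B x t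
  have hsum : HasDerivAt (phiF A Q B x)
      ((-(Aᵀ.mulVec (pv A Q B x t)) - Q.mulVec (qv A Q B x t)) ⬝ᵥ qv A Q B x t
        + pv A Q B x t ⬝ᵥ ((B * Bᵀ).mulVec (pv A Q B x t) + A.mulVec (qv A Q B x t))) t := by
    have : ∀ s, phiF A Q B x s = ∑ i, pv A Q B x s i * qv A Q B x s i := fun s => rfl
    simp only [funext this]
    have hder : HasDerivAt (fun s => ∑ i, pv A Q B x s i * qv A Q B x s i)
        (∑ i, ((-(Aᵀ.mulVec (pv A Q B x t)) - Q.mulVec (qv A Q B x t)) i * qv A Q B x t i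
          + pv A Q B x t i * ((B * Bᵀ).mulVec (pv A Q B x t) + A.mulVec (qv A Q B x t)) i)) t :=
      HasDerivAt.fun_sum fun i _ => (hasDerivAt_pi.1 hp i).mul (hasDerivAt_pi.1 hq i)
    convert hder using 1
    simp [dotProduct, Finset.sum_add_distrib]
  rw [dot_identity] at hsum
  exact hsum

end Dynamics

section Helpers

lemma deriv_eq_zero_of_eqOn_zero {E : Type*} [NormedAddCommGroup E] [NormedSpace ℝ E]
    {g g' : ℝ → E} (hg : ∀ t, HasDerivAt g (g' t) t) (hg' : Continuous g')
    {τ : ℝ} (hτ : 0 < τ) (h0 : ∀ t ∈ Set.Icc (0:ℝ) τ, g t = 0) :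
    ∀ t ∈ Set.Icc (0:ℝ) τ, g' t = 0 := by
  have hIoo : ∀ t ∈ Set.Ioo (0:ℝ) τ, g' t = 0 := by
    intro t ht
    have hev : g =ᶠ[nhds t] (fun _ => 0) :=
      Filter.eventuallyEq_of_mem (Ioo_mem_nhds ht.1 ht.2)
        (fun u hu => h0 u (Set.Ioo_subset_Icc_self hu))
    have h1 : HasDerivAt (fun _ : ℝ => (0:E)) (g' t) t := (hg t).congr_of_eventuallyEq hev.symm
    exact h1.unique (hasDerivAt_const t 0)
  intro t ht
  have hclos : Set.Icc (0:ℝ) τ = closure (Set.Ioo 0 τ) := (closure_Ioo hτ.ne).symm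
  exact Set.EqOn.closure (fun u hu => hIoo u hu) hg' continuous_const (hclos ▸ ht)

lemma sq_int_le (F : ℝ → ℝ) (hF : Continuous F) {s : ℝ} (hs : 0 ≤ s) :
    (∫ r in (0:ℝ)..s, F r) ^ 2 ≤ s * ∫ r in (0:ℝ)..s, F r ^ 2 := by
  set G := fun t : ℝ => t * (∫ r in (0:ℝ)..t, F r ^ 2) - (∫ r in (0:ℝ)..t, F r) ^ 2 with hGdef
  have hI1 : ∀ t : ℝ, HasDerivAt (fun u => ∫ r in (0:ℝ)..u, F r) (F t) t :=
    fun t => (hF.integral_hasStrictDerivAt 0 t).hasDerivAt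
  have hI2 : ∀ t : ℝ, HasDerivAt (fun u => ∫ r in (0:ℝ)..u, F r ^ 2) (F t ^ 2) t :=
    fun t => ((hF.pow 2).integral_hasStrictDerivAt 0 t).hasDerivAt
  have hG : ∀ t : ℝ, HasDerivAt G
      ((∫ r in (0:ℝ)..t, F r ^ 2) + t * F t ^ 2 - 2 * (∫ r in (0:ℝ)..t, F r) * F t) t := by
    intro t
    have h3 := ((hasDerivAt_id t).mul (hI2 t)).sub ((hI1 t).pow 2)
    refine h3.congr_deriv ?_
    simp only [id]
    push_cast
    ring
  have hval : ∀ t : ℝ, 0 ≤ t →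
      0 ≤ (∫ r in (0:ℝ)..t, F r ^ 2) + t * F t ^ 2 - 2 * (∫ r in (0:ℝ)..t, F r) * F t := by
    intro t ht
    have heq : ∀ r : ℝ, (F r - F t) ^ 2 = (F r ^ 2 - 2 * F t * F r) + F t ^ 2 := fun r => by ring
    have hnn : (0:ℝ) ≤ ∫ r in (0:ℝ)..t, (F r - F t) ^ 2 :=
      intervalIntegral.integral_nonneg ht (fun r _ => sq_nonneg _)
    simp only [heq] at hnn
    rw [intervalIntegral.integral_add (f := fun r => F r ^ 2 - 2 * F t * F r) (g := fun _ => F t ^ 2)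
        (((hF.pow 2).sub (continuous_const.mul hF)).intervalIntegrable 0 t)
        (intervalIntegrable_const),
      intervalIntegral.integral_sub (f := fun r => F r ^ 2) (g := fun r => 2 * F t * F r) ((hF.pow 2).intervalIntegrable 0 t)
        ((continuous_const.mul hF).intervalIntegrable 0 t),
      intervalIntegral.integral_const, intervalIntegral.integral_const_mul] at hnn
    simp only [sub_zero, smul_eq_mul] at hnn
    nlinarith [hnn]
  have hcont : Continuous G := continuous_iff_continuousAt.2 fun t => (hG t).continuousAt
  have hmono : MonotoneOn G (Set.Icc 0 s) := by
    apply monotoneOn_of_deriv_nonneg (convex_Icc 0 s) hcont.continuousOn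
    · intro t ht
      exact (hG t).differentiableAt.differentiableWithinAt
    · intro t ht
      rw [interior_Icc] at ht
      rw [(hG t).deriv]
      exact hval t ht.1.le
  have h0s := hmono (Set.left_mem_Icc.2 hs) (Set.right_mem_Icc.2 hs) hs
  have hzero : G 0 = 0 := by simp [hGdef]
  rw [hzero] at h0s
  simp only [hGdef] at h0s
  linarith

lemma eq_zero_of_integral_sq (F : ℝ → ℝ) (hF : Continuous F) {τ : ℝ} (hτ : 0 < τ)
    (h : (∫ r in (0:ℝ)..τ, F r ^ 2) = 0) : ∀ t ∈ Set.Icc (0:ℝ) τ, F t = 0 := by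
  set G := fun u : ℝ => ∫ r in (0:ℝ)..u, F r ^ 2 with hGdef
  have hG0 : ∀ t ∈ Set.Icc (0:ℝ) τ, G t = 0 := by
    intro t ht
    have h1 : 0 ≤ G t := intervalIntegral.integral_nonneg ht.1 (fun u _ => sq_nonneg _)
    have h2 : G t ≤ G τ := by
      apply intervalIntegral.integral_mono_interval le_rfl ht.1 ht.2
      · exact ae_of_all _ fun u => sq_nonneg _
      · exact (hF.pow 2).intervalIntegrable 0 τ
    have h3 : G τ = 0 := h
    linarith
  have hder : ∀ t : ℝ, HasDerivAt G (F t ^ 2) t :=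
    fun t => ((hF.pow 2).integral_hasStrictDerivAt 0 t).hasDerivAt
  have hz := deriv_eq_zero_of_eqOn_zero hder (hF.pow 2) hτ hG0
  intro t ht
  exact pow_eq_zero_iff two_ne_zero |>.mp (hz t ht)

lemma abs_dot_le {k : ℕ} (a b : Fin k → ℝ) : |a ⬝ᵥ b| ≤ (k:ℝ) * ‖a‖ * ‖b‖ := by
  calc |a ⬝ᵥ b| ≤ ∑ i, |a i * b i| := Finset.abs_sum_le_sum_abs _ _
    _ ≤ ∑ _i : Fin k, ‖a‖ * ‖b‖ := by
        apply Finset.sum_le_sum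
        intro i _
        rw [abs_mul]
        exact mul_le_mul (norm_le_pi_norm a i) (norm_le_pi_norm b i) (abs_nonneg _) (norm_nonneg _)
    _ = (k:ℝ) * ‖a‖ * ‖b‖ := by simp [Finset.sum_const, mul_assoc]

lemma sq_norm_le_dot {k : ℕ} (a : Fin k → ℝ) : ‖a‖ ^ 2 ≤ a ⬝ᵥ a := by
  rcases isEmpty_or_nonempty (Fin k) with hk | hk
  · simp [dotProduct, norm_le_zero_iff.mp (by simp [Pi.norm_def] : ‖a‖ ≤ 0)]
  · obtain ⟨i, hi⟩ := Finite.exists_max fun i => |a i|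
    have h1 : ‖a‖ ≤ |a i| := (pi_norm_le_iff_of_nonneg (abs_nonneg _)).2 fun j => hi j
    calc ‖a‖ ^ 2 ≤ |a i| ^ 2 := by
          apply pow_le_pow_left₀ (norm_nonneg _) h1
      _ = a i * a i := by rw [sq_abs]; ring
      _ ≤ ∑ j, a j * a j :=
          Finset.single_le_sum (f := fun j => a j * a j) (fun j _ => mul_self_nonneg _)
            (Finset.mem_univ i)
      _ = a ⬝ᵥ a := rfl

end Helpers

section Core
attribute [local instance] Matrix.linftyOpNormedAddCommGroup Matrix.linftyOpNormedRing
  Matrix.linftyOpNormedAlgebra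

variable (A Q : Matrix (Fin n) (Fin n) ℝ) (B : Matrix (Fin n) (Fin m) ℝ) (x : Fin n → ℝ)

lemma continuous_dotfun {k : ℕ} {f g : ℝ → Fin k → ℝ} (hf : Continuous f) (hg : Continuous g) :
    Continuous fun s => f s ⬝ᵥ g s := by
  have : (fun s => f s ⬝ᵥ g s) = fun s => ∑ i, f s i * g s i := rfl
  rw [this]
  exact continuous_finset_sum _ fun i _ =>
    ((continuous_apply i).comp hf).mul ((continuous_apply i).comp hg)

lemma continuous_psiF : Continuous (psiF A Q B x) := by
  have hff := continuous_ff A Q B x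
  have hq := continuous_qv A Q B x
  have hQq : Continuous fun s => Q.mulVec (qv A Q B x s) := by
    have : Continuous fun s => mvL Q (qv A Q B x s) := (mvL Q).continuous.comp hq
    simpa using this
  exact (continuous_dotfun hff hff).sub (continuous_dotfun hq hQq)

lemma phiF_eq_integral {τ : ℝ} :
    phiF A Q B x τ = ∫ s in (0:ℝ)..τ, psiF A Q B x s := by
  have h := intervalIntegral.integral_eq_sub_of_hasDerivAt
    (f := phiF A Q B x) (f' := psiF A Q B x)
    (fun s _ => hasDerivAt_phiF A Q B x s)
    ((continuous_psiF A Q B x).intervalIntegrable 0 τ)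
  have h0 : phiF A Q B x 0 = 0 := by
    rw [phiF, qv_zero]
    simp
  rw [h, h0, sub_zero]

/-- auxiliary trajectory for variation of constants -/
def wv (s : ℝ) : Fin n → ℝ := (NormedSpace.exp (s • (-A))).mulVec (qv A Q B x s)

lemma hasDerivAt_wv (s : ℝ) :
    HasDerivAt (wv A Q B x)
      ((NormedSpace.exp (s • (-A))).mulVec (B.mulVec (ff A Q B x s))) s := by
  have h := hasDerivAt_exp_mulVec (-A) (hasDerivAt_qv A Q B x s)
  have hcom : (-A) * NormedSpace.exp (s • (-A))
      = NormedSpace.exp (s • (-A)) * (-A) :=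
    (((Commute.refl (-A)).smul_right s).exp_right).eq
  have h2 : (-A).mulVec ((NormedSpace.exp (s • (-A))).mulVec (qv A Q B x s))
        + (NormedSpace.exp (s • (-A))).mulVec
            ((B * Bᵀ).mulVec (pv A Q B x s) + A.mulVec (qv A Q B x s))
      = (NormedSpace.exp (s • (-A))).mulVec (B.mulVec (ff A Q B x s)) := by
    simp only [ff, Matrix.mulVec_add, Matrix.mulVec_mulVec, mul_assoc]
    rw [hcom, mul_neg, Matrix.neg_mulVec]
    abel
  rw [← h2]
  exact h

lemma wv_zero : wv A Q B x 0 = 0 := by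
  rw [wv, qv_zero, Matrix.mulVec_zero]

lemma continuous_wv_integrand :
    Continuous fun r => (NormedSpace.exp (r • (-A))).mulVec (B.mulVec (ff A Q B x r)) := by
  have h1 : Continuous fun r => mvL (NormedSpace.exp (r • (-A))) :=
    mvL.continuous.comp (continuous_exp_smul (-A))
  have h2 : Continuous fun r => B.mulVec (ff A Q B x r) := by
    have : Continuous fun r => mvL B (ff A Q B x r) :=
      (mvL B).continuous.comp (continuous_ff A Q B x)
    simpa using this
  have := h1.clm_apply h2
  simpa using this

lemma wv_eq_integral (s : ℝ) :
    wv A Q B x s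
      = ∫ r in (0:ℝ)..s, (NormedSpace.exp (r • (-A))).mulVec (B.mulVec (ff A Q B x r)) := by
  have h := intervalIntegral.integral_eq_sub_of_hasDerivAt
    (f := wv A Q B x)
    (f' := fun r => (NormedSpace.exp (r • (-A))).mulVec (B.mulVec (ff A Q B x r)))
    (fun r _ => hasDerivAt_wv A Q B x r)
    ((continuous_wv_integrand A Q B x).intervalIntegrable 0 s)
  rw [h, wv_zero, sub_zero]

lemma qv_from_wv (s : ℝ) :
    qv A Q B x s = (NormedSpace.exp (s • A)).mulVec (wv A Q B x s) := by
  have h1 : NormedSpace.exp (s • A) * NormedSpace.exp (s • (-A)) = 1 := by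
    rw [← Matrix.exp_add_of_commute _ _ (((Commute.refl A).neg_right).smul_left s |>.smul_right s)]
    rw [smul_neg, add_neg_cancel, NormedSpace.exp_zero]
  rw [wv, Matrix.mulVec_mulVec, h1, Matrix.one_mulVec]

lemma exists_K :
    ∃ K : ℝ, 0 ≤ K ∧ ∀ (x : Fin n → ℝ) (τ : ℝ), 0 ≤ τ → τ ≤ 1 →
      (1 - K * τ ^ 2) * (∫ s in (0:ℝ)..τ, ‖ff A Q B x s‖ ^ 2) ≤ phiF A Q B x τ := by
  obtain ⟨c1, hc1⟩ := (isCompact_Icc (a := (0:ℝ)) (b := 1)).exists_bound_of_continuousOn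
      ((mvL.continuous.comp (continuous_exp_smul A)).continuousOn)
  obtain ⟨c2, hc2⟩ := (isCompact_Icc (a := (0:ℝ)) (b := 1)).exists_bound_of_continuousOn
      ((mvL.continuous.comp (continuous_exp_smul (-A))).continuousOn)
  have hc1n : 0 ≤ c1 := le_trans (norm_nonneg _) (hc1 0 (by norm_num))
  have hc2n : 0 ≤ c2 := le_trans (norm_nonneg _) (hc2 0 (by norm_num))
  set cB : ℝ := ‖mvL B‖ with hcB
  set cQ : ℝ := ‖mvL Q‖ with hcQ
  set c : ℝ := c1 * (c2 * cB) with hc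
  have hcn : 0 ≤ c := by positivity
  set K : ℝ := (n:ℝ) * cQ * c ^ 2 with hK
  have hKn : 0 ≤ K := by positivity
  refine ⟨K, hKn, ?_⟩
  intro x τ hτ0 hτ1
  set F := fun s : ℝ => ‖ff A Q B x s‖ with hFdef
  have hFc : Continuous F := (continuous_ff A Q B x).norm
  have hFnn : ∀ s, 0 ≤ F s := fun s => norm_nonneg _
  set I := ∫ s in (0:ℝ)..τ, F s ^ 2 with hIdef
  have hInn : 0 ≤ I := intervalIntegral.integral_nonneg hτ0 fun s _ => sq_nonneg _
  -- bound on the `q` part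
  have hq : ∀ s ∈ Set.Icc (0:ℝ) τ, ‖qv A Q B x s‖ ≤ c * ∫ r in (0:ℝ)..s, F r := by
    intro s hs
    have hs1 : s ∈ Set.Icc (0:ℝ) 1 := ⟨hs.1, hs.2.trans hτ1⟩
    have hwnorm : ‖wv A Q B x s‖ ≤ (c2 * cB) * ∫ r in (0:ℝ)..s, F r := by
      rw [wv_eq_integral]
      have hgb : ∀ r ∈ Set.Icc (0:ℝ) s,
          ‖(NormedSpace.exp (r • (-A))).mulVec (B.mulVec (ff A Q B x r))‖
            ≤ (c2 * cB) * F r := by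
        intro r hr
        have hr1 : r ∈ Set.Icc (0:ℝ) 1 := ⟨hr.1, hr.2.trans hs1.2⟩
        have e1 : (NormedSpace.exp (r • (-A))).mulVec (B.mulVec (ff A Q B x r))
            = mvL (NormedSpace.exp (r • (-A))) (mvL B (ff A Q B x r)) := by simp
        rw [e1]
        calc ‖mvL (NormedSpace.exp (r • (-A))) (mvL B (ff A Q B x r))‖
            ≤ ‖mvL (NormedSpace.exp (r • (-A)))‖ * ‖mvL B (ff A Q B x r)‖ :=
              ContinuousLinearMap.le_opNorm _ _
          _ ≤ c2 * (cB * F r) := by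
              apply mul_le_mul (hc2 r hr1) ?_ (norm_nonneg _) hc2n
              exact le_trans (ContinuousLinearMap.le_opNorm _ _) le_rfl
          _ = (c2 * cB) * F r := by ring
      calc ‖∫ r in (0:ℝ)..s, (NormedSpace.exp (r • (-A))).mulVec (B.mulVec (ff A Q B x r))‖
          ≤ ∫ r in (0:ℝ)..s, ‖(NormedSpace.exp (r • (-A))).mulVec (B.mulVec (ff A Q B x r))‖ :=
            intervalIntegral.norm_integral_le_integral_norm hs.1
        _ ≤ ∫ r in (0:ℝ)..s, (c2 * cB) * F r := by
            apply intervalIntegral.integral_mono_on hs.1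
            · exact ((continuous_wv_integrand A Q B x).norm).intervalIntegrable 0 s
            · exact (continuous_const.mul hFc).intervalIntegrable 0 s
            · exact hgb
        _ = (c2 * cB) * ∫ r in (0:ℝ)..s, F r := intervalIntegral.integral_const_mul _ _
    have hqe : ‖qv A Q B x s‖ = ‖mvL (NormedSpace.exp (s • A)) (wv A Q B x s)‖ := by
      rw [qv_from_wv]; simp
    rw [hqe, hc]
    calc ‖mvL (NormedSpace.exp (s • A)) (wv A Q B x s)‖
        ≤ ‖mvL (NormedSpace.exp (s • A))‖ * ‖wv A Q B x s‖ :=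
          ContinuousLinearMap.le_opNorm _ _
      _ ≤ c1 * ((c2 * cB) * ∫ r in (0:ℝ)..s, F r) :=
          mul_le_mul (hc1 s hs1) hwnorm (norm_nonneg _) hc1n
      _ = c1 * (c2 * cB) * ∫ r in (0:ℝ)..s, F r := by ring
  -- pointwise lower bound for ψ
  have hψ : ∀ s ∈ Set.Icc (0:ℝ) τ, F s ^ 2 - K * τ * I ≤ psiF A Q B x s := by
    intro s hs
    have hIs : (0:ℝ) ≤ ∫ r in (0:ℝ)..s, F r := intervalIntegral.integral_nonneg hs.1
      fun r _ => hFnn r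
    have hq2 : ‖qv A Q B x s‖ ^ 2 ≤ c ^ 2 * (τ * I) := by
      have h1 : ‖qv A Q B x s‖ ^ 2 ≤ (c * ∫ r in (0:ℝ)..s, F r) ^ 2 :=
        pow_le_pow_left₀ (norm_nonneg _) (hq s hs) 2
      have h2 : (∫ r in (0:ℝ)..s, F r) ^ 2 ≤ s * ∫ r in (0:ℝ)..s, F r ^ 2 :=
        sq_int_le F hFc hs.1
      have h3 : ∫ r in (0:ℝ)..s, F r ^ 2 ≤ I := by
        apply intervalIntegral.integral_mono_interval le_rfl hs.1 hs.2
        · exact ae_of_all _ fun r => sq_nonneg _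
        · exact (hFc.pow 2).intervalIntegrable 0 τ
      have h4 : s * ∫ r in (0:ℝ)..s, F r ^ 2 ≤ τ * I := by
        apply mul_le_mul hs.2 h3 (intervalIntegral.integral_nonneg hs.1 fun r _ => sq_nonneg _)
          hτ0
      calc ‖qv A Q B x s‖ ^ 2 ≤ (c * ∫ r in (0:ℝ)..s, F r) ^ 2 := h1
        _ = c ^ 2 * (∫ r in (0:ℝ)..s, F r) ^ 2 := by ring
        _ ≤ c ^ 2 * (s * ∫ r in (0:ℝ)..s, F r ^ 2) := by
            exact mul_le_mul_of_nonneg_left h2 (by positivity)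
        _ ≤ c ^ 2 * (τ * I) := mul_le_mul_of_nonneg_left h4 (by positivity)
    have hQb : |qv A Q B x s ⬝ᵥ Q.mulVec (qv A Q B x s)| ≤ (n:ℝ) * cQ * ‖qv A Q B x s‖ ^ 2 := by
      calc |qv A Q B x s ⬝ᵥ Q.mulVec (qv A Q B x s)|
          ≤ (n:ℝ) * ‖qv A Q B x s‖ * ‖Q.mulVec (qv A Q B x s)‖ := abs_dot_le _ _
        _ ≤ (n:ℝ) * ‖qv A Q B x s‖ * (cQ * ‖qv A Q B x s‖) := by
            apply mul_le_mul_of_nonneg_left ?_ (by positivity)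
            have : Q.mulVec (qv A Q B x s) = mvL Q (qv A Q B x s) := by simp
            rw [this]
            exact ContinuousLinearMap.le_opNorm _ _
        _ = (n:ℝ) * cQ * ‖qv A Q B x s‖ ^ 2 := by ring
    have hffdot : F s ^ 2 ≤ ff A Q B x s ⬝ᵥ ff A Q B x s := sq_norm_le_dot _
    have : (n:ℝ) * cQ * ‖qv A Q B x s‖ ^ 2 ≤ K * τ * I := by
      rw [hK]
      calc (n:ℝ) * cQ * ‖qv A Q B x s‖ ^ 2 ≤ (n:ℝ) * cQ * (c ^ 2 * (τ * I)) := by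
            apply mul_le_mul_of_nonneg_left hq2 (by positivity)
        _ = (n:ℝ) * cQ * c ^ 2 * τ * I := by ring
    rw [psiF]
    have habs := (abs_le.mp hQb).2
    have habs' := (abs_le.mp hQb).1
    nlinarith [hffdot]
  -- integrate the lower bound
  have hmono := intervalIntegral.integral_mono_on (μ := volume) hτ0
      (((hFc.pow 2).sub continuous_const).intervalIntegrable 0 τ)
      ((continuous_psiF A Q B x).intervalIntegrable 0 τ) hψ
  rw [phiF_eq_integral]
  have hcalc : (∫ s in (0:ℝ)..τ, (F s ^ 2 - K * τ * I)) = (1 - K * τ ^ 2) * I := by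
    rw [intervalIntegral.integral_sub (f := fun s => F s ^ 2) (g := fun _ => K * τ * I) ((hFc.pow 2).intervalIntegrable 0 τ)
      (intervalIntegrable_const), intervalIntegral.integral_const]
    simp only [smul_eq_mul, sub_zero]
    ring
  calc (1 - K * τ ^ 2) * I = ∫ s in (0:ℝ)..τ, (F s ^ 2 - K * τ * I) := hcalc.symm
    _ ≤ ∫ s in (0:ℝ)..τ, psiF A Q B x s := hmono

lemma neg_pow_smul (C : Matrix (Fin n) (Fin n) ℝ) (k : ℕ) :
    (-C) ^ k = ((-1:ℝ) ^ k) • C ^ k := by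
  induction k with
  | zero => simp
  | succ k ih =>
      rw [pow_succ, pow_succ, pow_succ, ih, Matrix.smul_mul, mul_neg, mul_neg_one, neg_smul,
        smul_neg]

lemma x_zero_of_ff_vanish (hKal : Kalman A B) {τ : ℝ} (hτ : 0 < τ)
    (hff : ∀ t ∈ Set.Icc (0:ℝ) τ, ff A Q B x t = 0) : x = 0 := by
  -- the `q`-part vanishes
  have hq0 : ∀ s ∈ Set.Icc (0:ℝ) τ, qv A Q B x s = 0 := by
    intro s hs
    have hw : wv A Q B x s = 0 := by
      rw [wv_eq_integral]
      have heq : Set.EqOn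
          (fun r => (NormedSpace.exp (r • (-A))).mulVec (B.mulVec (ff A Q B x r)))
          (fun _ => (0 : Fin n → ℝ)) (Set.uIcc 0 s) := by
        intro r hr
        rw [Set.uIcc_of_le hs.1] at hr
        have hr0 : ff A Q B x r = 0 := hff r ⟨hr.1, hr.2.trans hs.2⟩
        simp [hr0]
      rw [intervalIntegral.integral_congr heq]
      simp
    rw [qv_from_wv, hw, Matrix.mulVec_zero]
  -- the function exp(s•Aᵀ) p(s) is constant
  set yv := fun s : ℝ => (NormedSpace.exp (s • Aᵀ)).mulVec (pv A Q B x s) with hyv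
  have hyder : ∀ s ∈ Set.Icc (0:ℝ) τ, HasDerivAt yv 0 s := by
    intro s hs
    have h := hasDerivAt_exp_mulVec Aᵀ (hasDerivAt_pv A Q B x s)
    rw [hq0 s hs] at h
    have hcom : Aᵀ * NormedSpace.exp (s • Aᵀ) = NormedSpace.exp (s • Aᵀ) * Aᵀ :=
      (((Commute.refl Aᵀ).smul_right s).exp_right).eq
    have hval : Aᵀ.mulVec ((NormedSpace.exp (s • Aᵀ)).mulVec (pv A Q B x s))
        + (NormedSpace.exp (s • Aᵀ)).mulVec
            (-(Aᵀ.mulVec (pv A Q B x s)) - Q.mulVec 0) = 0 := by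
      simp only [Matrix.mulVec_zero, sub_zero, Matrix.mulVec_neg, Matrix.mulVec_mulVec, hcom]
      simp
    rw [hval] at h
    exact h
  have hycont : Continuous yv := by
    have := (mvL.continuous.comp (continuous_exp_smul Aᵀ)).clm_apply (continuous_pv A Q B x)
    simpa [hyv] using this
  have hconst : ∀ s ∈ Set.Icc (0:ℝ) τ, yv s = yv 0 :=
    constant_of_has_deriv_right_zero hycont.continuousOn
      (fun s hs => ((hyder s (Set.Ico_subset_Icc_self hs)).hasDerivWithinAt))
  have hy0 : yv 0 = x := by
    rw [hyv]
    simp [pv_zero, NormedSpace.exp_zero, Matrix.one_mulVec]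
  -- explicit formula for p on [0, τ]
  have hp : ∀ s ∈ Set.Icc (0:ℝ) τ,
      pv A Q B x s = (NormedSpace.exp (s • (-Aᵀ))).mulVec x := by
    intro s hs
    have h1 : NormedSpace.exp (s • (-Aᵀ)) * NormedSpace.exp (s • Aᵀ) = 1 := by
      rw [← Matrix.exp_add_of_commute _ _
        ((((Commute.refl Aᵀ).neg_left).smul_left s).smul_right s)]
      rw [smul_neg, neg_add_cancel, NormedSpace.exp_zero]
    have h2 := (hconst s hs).trans hy0
    rw [hyv] at h2
    have h3 := congrArg (fun v => (NormedSpace.exp (s • (-Aᵀ))).mulVec v) h2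
    simp only [Matrix.mulVec_mulVec] at h3
    rw [h1, Matrix.one_mulVec] at h3
    exact h3
  -- all iterated derivatives vanish
  have hderAll : ∀ (k : ℕ) (s : ℝ), HasDerivAt
      (fun t => (Bᵀ * (-Aᵀ) ^ k).mulVec ((NormedSpace.exp (t • (-Aᵀ))).mulVec x))
      ((Bᵀ * (-Aᵀ) ^ (k+1)).mulVec ((NormedSpace.exp (s • (-Aᵀ))).mulVec x)) s := by
    intro k s
    have hu := hasDerivAt_exp_mulVec (-Aᵀ) (hasDerivAt_const s x)
    simp only [Matrix.mulVec_zero, add_zero] at hu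
    have h2 := (mvL (Bᵀ * (-Aᵀ) ^ k)).hasFDerivAt.comp_hasDerivAt s hu
    simp only [Function.comp_def, mvL_apply, Matrix.mulVec_mulVec] at h2
    simp only [Matrix.mulVec_mulVec]
    have he : Bᵀ * (-Aᵀ) ^ k * ((-Aᵀ) * NormedSpace.exp (s • (-Aᵀ)))
        = Bᵀ * (-Aᵀ) ^ (k+1) * NormedSpace.exp (s • (-Aᵀ)) := by
      rw [← Matrix.mul_assoc, Matrix.mul_assoc Bᵀ ((-Aᵀ) ^ k) (-Aᵀ), ← pow_succ]
    rw [he] at h2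
    exact h2
  have hθ : ∀ k : ℕ, ∀ s ∈ Set.Icc (0:ℝ) τ,
      (Bᵀ * (-Aᵀ) ^ k).mulVec ((NormedSpace.exp (s • (-Aᵀ))).mulVec x) = 0 := by
    intro k
    induction k with
    | zero =>
        intro s hs
        have h0 := hff s hs
        rw [ff, hp s hs] at h0
        rw [pow_zero, Matrix.mul_one, Matrix.mulVec_mulVec]
        rwa [Matrix.mulVec_mulVec] at h0
    | succ k ih =>
        have hcont : Continuous fun s : ℝ =>
            (Bᵀ * (-Aᵀ) ^ (k+1)).mulVec ((NormedSpace.exp (s • (-Aᵀ))).mulVec x) :=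
          continuous_iff_continuousAt.2 fun s => (hderAll (k+1) s).continuousAt
        exact deriv_eq_zero_of_eqOn_zero (hderAll k) hcont hτ ih
  -- evaluate at 0
  have hk0 : ∀ k : ℕ, Bᵀ.mulVec (((-Aᵀ) ^ k).mulVec x) = 0 := by
    intro k
    have h := hθ k 0 ⟨le_rfl, hτ.le⟩
    rw [zero_smul, NormedSpace.exp_zero, Matrix.one_mulVec, ← Matrix.mulVec_mulVec] at h
    exact h
  -- dot products with the Kalman generators vanish
  have hgen : ∀ v ∈ {v : Fin n → ℝ | ∃ j : Fin n, ∃ i : Fin m,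
      v = (A ^ (j : ℕ)).mulVec (Bᵀ i)}, v ⬝ᵥ x = 0 := by
    rintro v ⟨j, i, rfl⟩
    have h1 := congrFun (hk0 (j : ℕ)) i
    have h2 : Bᵀ.mulVec (((-Aᵀ) ^ (j:ℕ)).mulVec x) i
        = Bᵀ i ⬝ᵥ (((-Aᵀ) ^ (j:ℕ)).mulVec x) := rfl
    have h3 : (-Aᵀ : Matrix (Fin n) (Fin n) ℝ) ^ (j:ℕ) = ((-A) ^ (j:ℕ))ᵀ := by
      rw [← Matrix.transpose_neg A, ← Matrix.transpose_pow]
    have h4 : Bᵀ i ⬝ᵥ ((((-A) ^ (j:ℕ))ᵀ).mulVec x)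
        = (((-A) ^ (j:ℕ)).mulVec (Bᵀ i)) ⬝ᵥ x := by
      rw [Matrix.dotProduct_mulVec, Matrix.vecMul_transpose]
    have h5 : ((-A) ^ (j:ℕ)).mulVec (Bᵀ i) ⬝ᵥ x
        = ((-1:ℝ) ^ (j:ℕ)) * ((A ^ (j:ℕ)).mulVec (Bᵀ i) ⬝ᵥ x) := by
      rw [neg_pow_smul, Matrix.smul_mulVec, smul_dotProduct, smul_eq_mul]
    have h6 : ((-1:ℝ) ^ (j:ℕ)) * ((A ^ (j:ℕ)).mulVec (Bᵀ i) ⬝ᵥ x) = 0 := by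
      rw [← h5, ← h4, ← h3, ← h2, h1]
      simp
    have h7 : ((-1:ℝ) ^ (j:ℕ)) ≠ 0 := pow_ne_zero _ (by norm_num)
    exact (mul_eq_zero.mp h6).resolve_left h7
  -- conclude via the Kalman condition
  replace hKal : Submodule.span ℝ {v : Fin n → ℝ | ∃ j : Fin n, ∃ i : Fin m,
      v = (A ^ (j : ℕ)).mulVec (Bᵀ i)} = ⊤ := hKal
  set L : (Fin n → ℝ) →ₗ[ℝ] ℝ :=
    { toFun := fun v => v ⬝ᵥ x
      map_add' := fun a b => add_dotProduct a b x
      map_smul' := fun c a => by simp [smul_dotProduct] } with hL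
  have hle : Submodule.span ℝ {v : Fin n → ℝ | ∃ j : Fin n, ∃ i : Fin m,
      v = (A ^ (j : ℕ)).mulVec (Bᵀ i)} ≤ LinearMap.ker L :=
    Submodule.span_le.mpr fun v hv => LinearMap.mem_ker.mpr (hgen v hv)
  rw [hKal] at hle
  have hx0 : L x = 0 := hle Submodule.mem_top
  exact dotProduct_self_eq_zero.mp hx0

end Core

section FinalPrep

variable (A Q : Matrix (Fin n) (Fin n) ℝ) (B : Matrix (Fin n) (Fin m) ℝ)

lemma continuous_flow_mulVec (v : Fin n ⊕ Fin n → ℝ) :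
    Continuous fun τ => (flow A Q B τ).mulVec v := by
  apply continuous_iff_continuousAt.2
  intro t
  have h := hasDerivAt_exp_mulVec (Mm A Q B) (hasDerivAt_const t v)
  simp only [← flow_eq] at h
  exact h.continuousAt

lemma continuous_R1 : Continuous fun τ => R1 A Q B τ := by
  apply continuous_matrix
  intro i j
  have h := (continuous_apply (Sum.inl i)).comp
    (continuous_flow_mulVec A Q B (Pi.single (Sum.inl j) 1))
  simpa [Matrix.mulVec_single, R1, Matrix.toBlocks₁₁, Function.comp_def] using h

lemma phiF_eq_quad (y : Fin n → ℝ) (τ : ℝ) :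
    phiF A Q B y τ = y ⬝ᵥ ((R1 A Q B τ)ᵀ * R3 A Q B τ).mulVec y := by
  rw [phiF, pv_eq, qv_eq, ← Matrix.mulVec_mulVec, Matrix.dotProduct_mulVec y,
    Matrix.vecMul_transpose, Matrix.dotProduct_mulVec]

end FinalPrep


/-- The `W` matrix: there exists `ε ∈ (0,T]` such that `R₁(τ)` is invertible on `[0,ε]`,
and `W(τ) = R₃(τ)R₁(τ)⁻¹` is symmetric on `[0,ε]` and positive definite on `(0,ε]`. -/
theorem W_matrix
    {n m : ℕ} (hm : 1 ≤ m) (hmn : m ≤ n)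
    (A Q : Matrix (Fin n) (Fin n) ℝ) (B : Matrix (Fin n) (Fin m) ℝ)
    (hQ : Q.IsSymm) (hB : B.rank = m)
    (T : ℝ) (hT : 0 < T) (hKal : Kalman A B)
    (hR3 : ∀ τ ∈ Set.Ioc 0 T, IsUnit (R3 A Q B τ)) :
    ∃ ε : ℝ, ε ∈ Set.Ioc 0 T ∧
      (∀ τ ∈ Set.Icc (0:ℝ) ε, IsUnit (R1 A Q B τ)) ∧
      (∀ τ ∈ Set.Icc (0:ℝ) ε, (R3 A Q B τ * (R1 A Q B τ)⁻¹).IsSymm) ∧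
      (∀ τ ∈ Set.Ioc (0:ℝ) ε, (R3 A Q B τ * (R1 A Q B τ)⁻¹).PosDef) := by
  -- the main estimate and its constant
  obtain ⟨K, hK0, hKest⟩ := exists_K A Q B
  -- invertibility of `R1` near `0`
  have hdet : Continuous fun τ => (R1 A Q B τ).det := (continuous_R1 A Q B).matrix_det
  have hne : (R1 A Q B 0).det ≠ 0 := by simp [R1_zero]
  obtain ⟨δ, hδ0, hδ⟩ := Metric.eventually_nhds_iff.mp (hdet.continuousAt.eventually_ne hne)
  -- choice of ε
  set ε : ℝ := min T (min (δ/2) (1/(K+1))) with hεdef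
  have hKpos : (0:ℝ) < K + 1 := by linarith
  have hε0 : 0 < ε := by
    apply lt_min hT
    apply lt_min (by linarith)
    positivity
  have hεT : ε ≤ T := min_le_left _ _
  have hεδ : ε ≤ δ/2 := le_trans (min_le_right _ _) (min_le_left _ _)
  have hεK : ε ≤ 1/(K+1) := le_trans (min_le_right _ _) (min_le_right _ _)
  have hε1 : ε ≤ 1 := by
    apply hεK.trans
    rw [div_le_one hKpos]
    linarith
  have hR1unit : ∀ τ ∈ Set.Icc (0:ℝ) ε, IsUnit (R1 A Q B τ) := by
    intro τ hτ
    apply (Matrix.isUnit_iff_isUnit_det _).2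
    apply isUnit_iff_ne_zero.2
    apply hδ
    rw [Real.dist_eq, sub_zero, abs_of_nonneg hτ.1]
    calc τ ≤ ε := hτ.2
      _ ≤ δ/2 := hεδ
      _ < δ := by linarith
  refine ⟨ε, ⟨hε0, hεT⟩, hR1unit, ?_, ?_⟩
  · intro τ hτ
    exact symm_of_key _ _ (key_identity A Q B hQ τ)
      ((Matrix.isUnit_iff_isUnit_det _).1 (hR1unit τ hτ))
  · intro τ hτ
    have hτIcc : τ ∈ Set.Icc (0:ℝ) ε := ⟨hτ.1.le, hτ.2⟩
    have hdetu : IsUnit (R1 A Q B τ).det :=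
      (Matrix.isUnit_iff_isUnit_det _).1 (hR1unit τ hτIcc)
    have hsym := symm_of_key _ _ (key_identity A Q B hQ τ) hdetu
    refine Matrix.posDef_iff_dotProduct_mulVec.mpr ⟨?_, ?_⟩
    · rw [Matrix.IsHermitian, Matrix.conjTranspose_eq_transpose_of_trivial]
      exact hsym
    · intro x hx
      have hstar : star x = x := by simp
      rw [hstar]
      set y := (R1 A Q B τ)⁻¹.mulVec x with hy
      have hxy : x = (R1 A Q B τ).mulVec y := by
        rw [hy, Matrix.mulVec_mulVec, Matrix.mul_nonsing_inv _ hdetu, Matrix.one_mulVec]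
      have hy0 : y ≠ 0 := by
        intro h0
        apply hx
        rw [hxy, h0, Matrix.mulVec_zero]
      have hquad := quad_congr (R1 A Q B τ) (R3 A Q B τ) hdetu x
      rw [← hy, ← phiF_eq_quad] at hquad
      rw [hquad]
      -- positivity of the integral
      set I : ℝ := ∫ s in (0:ℝ)..τ, ‖ff A Q B y s‖ ^ 2 with hIdef
      have hInn : 0 ≤ I := intervalIntegral.integral_nonneg hτ.1.le fun s _ => sq_nonneg _
      have hIpos : 0 < I := by
        rcases lt_or_eq_of_le hInn with h | h
        · exact h
        · exfalso
          apply hy0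
          apply x_zero_of_ff_vanish A Q B y hKal hτ.1
          intro t ht
          have := eq_zero_of_integral_sq _ ((continuous_ff A Q B y).norm) hτ.1 h.symm t ht
          exact norm_eq_zero.mp this
      have hest := hKest y τ hτ.1.le (hτ.2.trans hε1)
      have hfactor : 0 < 1 - K * τ ^ 2 := by
        have hτK : τ ≤ 1/(K+1) := hτ.2.trans hεK
        have hτ1 : τ ≤ 1 := hτ.2.trans hε1
        have hττ : τ ^ 2 ≤ τ := by nlinarith [hτ.1.le]
        have h2 : K * τ ^ 2 ≤ K * τ := mul_le_mul_of_nonneg_left hττ hK0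
        have h3 : K * τ ≤ K * (1/(K+1)) := mul_le_mul_of_nonneg_left hτK hK0
        have h4 : K * (1/(K+1)) < 1 := by
          rw [mul_one_div, div_lt_one hKpos]
          linarith
        linarith
      calc (0:ℝ) < (1 - K * τ ^ 2) * I := mul_pos hfactor hIpos
        _ ≤ phiF A Q B y τ := hest

end LQ
end
end

section
/- Riemannian model distortion coefficients via LQ problems: let n ≥ 2 and K ∈ ℝ with K < π². Take A = 0ₙ, B = Iₙ and Q = K·diag(I_{n−1}, 0) (the block-diagonal matrix with identity block of size n−1 and a zero 1×1 block). Then the flow e^{−τΩH} is given explicitly by the block matrix with entries cos(τ√K)I_{n−1}, 1, −√K sin(τ√K)I_{n−1}, 0, (sin(τ√K)/√K)I_{n−1}, τ, cos(τ√K)I_{n−1}, 1 in the appropriate positions (with the conventions sin(τ√K)/√K = τ for K = 0 and hyperbolic functions for K < 0); consequently R₃(τ) = diag((sin(τ√K)/√K)I_{n−1}, τ), R₃(τ) is invertible for all τ ∈ (0,1], and for every τ ∈ [0,1] the distortion coefficient β_τ = det R₃(τ)/det R₃(1) equals τ·(sin(τ√K)/sin(√K))^{n−1} if K > 0, τⁿ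 if K = 0, and τ·(sinh(τ√(−K))/sinh(√(−K)))^{n−1} if K < 0. -/
open Matrix MeasureTheory Filter Topology

noncomputable section

namespace LQ

variable {n m : ℕ}

/-- `sin(τ√K)/√K` (with the conventions `τ` for `K = 0` and hyperbolic functions for `K < 0`). -/
def sK (K τ : ℝ) : ℝ :=
  if 0 < K then Real.sin (τ * Real.sqrt K) / Real.sqrt K
  else if K = 0 then τ
  else Real.sinh (τ * Real.sqrt (-K)) / Real.sqrt (-K)

/-- `cos(τ√K)` (with the conventions `1` for `K = 0` and hyperbolic functions for `K < 0`). -/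
def cK (K τ : ℝ) : ℝ :=
  if 0 < K then Real.cos (τ * Real.sqrt K)
  else if K = 0 then 1
  else Real.cosh (τ * Real.sqrt (-K))

def Dg (n : ℕ) (a b : ℝ) : Matrix (Fin n) (Fin n) ℝ :=
  Matrix.diagonal (fun i : Fin n => if (i : ℕ) < n - 1 then a else b)

lemma Dg_mul {n : ℕ} (a b c d : ℝ) : Dg n a b * Dg n c d = Dg n (a * c) (b * d) := by
  simp only [Dg, Matrix.diagonal_mul_diagonal]
  exact congrArg _ (funext fun i => by split_ifs <;> ring)

lemma Dg_add {n : ℕ} (a b c d : ℝ) : Dg n a b + Dg n c d = Dg n (a + c) (b + d) := by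
  simp only [Dg, Matrix.diagonal_add]
  exact congrArg _ (funext fun i => by split_ifs <;> ring)

lemma smul_Dg {n : ℕ} (r a b : ℝ) : r • Dg n a b = Dg n (r * a) (r * b) := by
  simp only [Dg, ← Matrix.diagonal_smul]
  exact congrArg _ (funext fun i => by
    simp only [Pi.smul_apply, smul_eq_mul]; split_ifs <;> rfl)

lemma Dg_zero {n : ℕ} : Dg n 0 0 = 0 := by simp [Dg]

lemma Dg_one {n : ℕ} : Dg n 1 1 = 1 := by simp [Dg]

lemma neg_Dg {n : ℕ} (a b : ℝ) : -Dg n a b = Dg n (-a) (-b) := by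
  rw [neg_eq_iff_add_eq_zero, Dg_add]; simp [Dg]

lemma sK_zero (K : ℝ) : sK K 0 = 0 := by unfold sK; split_ifs <;> simp

lemma cK_zero (K : ℝ) : cK K 0 = 1 := by unfold cK; split_ifs <;> simp

lemma hasDerivAt_mul_sqrt (a τ : ℝ) : HasDerivAt (fun t : ℝ => t * a) a τ := by
  simpa using (hasDerivAt_id τ).mul_const a

lemma hasDerivAt_sK (K τ : ℝ) : HasDerivAt (fun t => sK K t) (cK K τ) τ := by
  rcases lt_trichotomy 0 K with hK | hK | hK
  · have h0 : Real.sqrt K ≠ 0 := ne_of_gt (Real.sqrt_pos.mpr hK)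
    have h2 := ((Real.hasDerivAt_sin (τ * Real.sqrt K)).comp τ
      (hasDerivAt_mul_sqrt (Real.sqrt K) τ)).div_const (Real.sqrt K)
    simp only [sK, cK, if_pos hK]
    convert h2 using 1
    case e'_9 => field_simp
    all_goals rfl
  · have hfun : sK K = fun t : ℝ => t := by
      funext t; simp [sK, ← hK]
    rw [hfun]
    have : cK K τ = 1 := by simp [cK, ← hK]
    rw [this]
    exact hasDerivAt_id τ
  · have hlt : ¬ 0 < K := not_lt.mpr hK.le
    have hne : K ≠ 0 := hK.ne
    have h2 := ((Real.hasDerivAt_sinh (τ * Real.sqrt (-K))).comp τ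
      (hasDerivAt_mul_sqrt (Real.sqrt (-K)) τ)).div_const (Real.sqrt (-K))
    have h0 : Real.sqrt (-K) ≠ 0 := ne_of_gt (Real.sqrt_pos.mpr (by linarith))
    simp only [sK, cK, if_neg hlt, if_neg hne]
    convert h2 using 1
    case e'_9 => field_simp
    all_goals rfl

lemma hasDerivAt_cK (K τ : ℝ) : HasDerivAt (fun t => cK K t) (-K * sK K τ) τ := by
  rcases lt_trichotomy 0 K with hK | hK | hK
  · have hKpos : (0:ℝ) < Real.sqrt K := Real.sqrt_pos.mpr hK
    have h2 := (Real.hasDerivAt_cos (τ * Real.sqrt K)).comp τ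
      (hasDerivAt_mul_sqrt (Real.sqrt K) τ)
    simp only [sK, cK, if_pos hK]
    convert h2 using 1
    case e'_9 =>
      field_simp
      rw [Real.sq_sqrt hK.le]
    all_goals rfl
  · have hfun : cK K = fun _ : ℝ => (1:ℝ) := by
      funext t; simp [cK, ← hK]
    rw [hfun]
    have : -K * sK K τ = 0 := by rw [← hK]; ring
    rw [this]
    exact hasDerivAt_const τ 1
  · have hlt : ¬ 0 < K := not_lt.mpr hK.le
    have hne : K ≠ 0 := hK.ne
    have h0 : (0:ℝ) < Real.sqrt (-K) := Real.sqrt_pos.mpr (by linarith)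
    have h2 := (Real.hasDerivAt_cosh (τ * Real.sqrt (-K))).comp τ
      (hasDerivAt_mul_sqrt (Real.sqrt (-K)) τ)
    simp only [sK, cK, if_neg hlt, if_neg hne]
    convert h2 using 1
    case e'_9 =>
      field_simp
      rw [Real.sq_sqrt (by linarith : (0:ℝ) ≤ -K)]
      ring
    all_goals rfl

lemma flow_eq_s17 {n : ℕ} (K : ℝ) (τ : ℝ) :
    flow (0 : Matrix (Fin n) (Fin n) ℝ)
      (K • Matrix.diagonal (fun i : Fin n => if (i : ℕ) < n - 1 then (1:ℝ) else 0))
      (1 : Matrix (Fin n) (Fin n) ℝ) τ =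
    Matrix.fromBlocks (Dg n (cK K τ) 1) (Dg n (-K * sK K τ) 0)
      (Dg n (sK K τ) τ) (Dg n (cK K τ) 1) := by
  set Qm : Matrix (Fin n) (Fin n) ℝ :=
    K • Matrix.diagonal (fun i : Fin n => if (i : ℕ) < n - 1 then (1:ℝ) else 0) with hQm
  have hQmDg : Qm = Dg n K 0 := by
    rw [hQm, show (Matrix.diagonal fun i : Fin n => if (i : ℕ) < n - 1 then (1:ℝ) else 0)
      = Dg n 1 0 from rfl, smul_Dg]
    norm_num
  set M : Matrix (Fin n ⊕ Fin n) (Fin n ⊕ Fin n) ℝ :=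
    Matrix.fromBlocks 0 (Dg n (-K) 0) 1 0 with hMdef
  have hsmul : (-τ) • (Om n * Ham (0 : Matrix (Fin n) (Fin n) ℝ) Qm (1 : Matrix (Fin n) (Fin n) ℝ)) = τ • M := by
    have h1 : Om n * Ham (0 : Matrix (Fin n) (Fin n) ℝ) Qm (1 : Matrix (Fin n) (Fin n) ℝ)
        = Matrix.fromBlocks 0 Qm (-1) 0 := by
      simp [Om, Ham, Matrix.fromBlocks_multiply]
    rw [h1, hQmDg, hMdef]
    rw [Matrix.fromBlocks_smul, Matrix.fromBlocks_smul]
    rw [show ((-τ) • Dg n K 0 : Matrix (Fin n) (Fin n) ℝ) = τ • Dg n (-K) 0 by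
      rw [smul_Dg, smul_Dg]; congr 1 <;> ring]
    congr 1 <;> simp
  set E1 := Matrix.fromBlocks (Dg n 1 0) (0 : Matrix (Fin n) (Fin n) ℝ) 0 (Dg n 1 0) with hE1
  set E2 := Matrix.fromBlocks (0 : Matrix (Fin n) (Fin n) ℝ) (Dg n (-K) 0) (Dg n 1 0) 0 with hE2
  set E3 := Matrix.fromBlocks (0 : Matrix (Fin n) (Fin n) ℝ) 0 (Dg n 0 1) 0 with hE3
  set C0 := Matrix.fromBlocks (Dg n 0 1) (0 : Matrix (Fin n) (Fin n) ℝ) 0 (Dg n 0 1) with hC0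
  set gg : ℝ → Matrix (Fin n ⊕ Fin n) (Fin n ⊕ Fin n) ℝ :=
    fun t => cK K t • E1 + sK K t • E2 + t • E3 + C0 with hgg
  have hE1M : E1 * M = E2 := by
    rw [hE1, hMdef, hE2, Matrix.fromBlocks_multiply]
    simp [Dg_mul]
  have hE2M : E2 * M = (-K) • E1 := by
    rw [hE1, hMdef, hE2, Matrix.fromBlocks_multiply, Matrix.fromBlocks_smul]
    simp only [Dg_mul, smul_Dg, Matrix.mul_zero, Matrix.zero_mul, Matrix.mul_one,
      add_zero, zero_add, smul_zero, mul_one, mul_zero]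
    norm_num
  have hE3M : E3 * M = 0 := by
    rw [hE3, hMdef, Matrix.fromBlocks_multiply]
    simp [Dg_mul, Dg_zero]
  have hC0M : C0 * M = E3 := by
    rw [hC0, hMdef, hE3, Matrix.fromBlocks_multiply]
    simp [Dg_mul, Dg_zero]
  letI : SeminormedRing (Matrix (Fin n ⊕ Fin n) (Fin n ⊕ Fin n) ℝ) :=
    Matrix.linftyOpSemiNormedRing
  letI : NormedRing (Matrix (Fin n ⊕ Fin n) (Fin n ⊕ Fin n) ℝ) :=
    Matrix.linftyOpNormedRing
  letI : NormedAlgebra ℝ (Matrix (Fin n ⊕ Fin n) (Fin n ⊕ Fin n) ℝ) :=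
    Matrix.linftyOpNormedAlgebra
  have hgM : ∀ t, gg t * M = (-K * sK K t) • E1 + cK K t • E2 + (1:ℝ) • E3 := by
    intro t
    rw [hgg]
    simp only [add_mul, smul_mul_assoc, hE1M, hE2M, hE3M, hC0M, smul_zero, smul_smul, one_smul]
    rw [show sK K t * -K = -K * sK K t from mul_comm _ _]
    abel
  have hderiv : ∀ t, HasDerivAt gg (gg t * M) t := by
    intro t
    rw [hgM t]
    exact ((((hasDerivAt_cK K t).smul_const E1).add
      ((hasDerivAt_sK K t).smul_const E2)).add
      ((hasDerivAt_id t).smul_const E3)).add_const C0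
  have hlip : ∀ t : ℝ,
      LipschitzOnWith ‖M‖₊ (fun y : Matrix (Fin n ⊕ Fin n) (Fin n ⊕ Fin n) ℝ => y * M)
        Set.univ := by
    intro t
    apply LipschitzWith.lipschitzOnWith
    apply LipschitzWith.of_dist_le_mul
    intro a b
    rw [dist_eq_norm, dist_eq_norm, ← sub_mul]
    calc ‖(a - b) * M‖ ≤ ‖a - b‖ * ‖M‖ := norm_mul_le _ _
      _ = ↑‖M‖₊ * ‖a - b‖ := by rw [coe_nnnorm]; ring
  have heq0 : NormedSpace.exp ((0:ℝ) • M) = gg 0 := by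
    rw [zero_smul, NormedSpace.exp_zero, hgg]
    simp only [cK_zero, sK_zero, zero_smul, one_smul, add_zero, zero_add]
    rw [hE1, hC0, Matrix.fromBlocks_add, Dg_add]
    norm_num [Dg_one, Matrix.fromBlocks_one]
  have hflow : NormedSpace.exp (τ • M) = gg τ := by
    have h0mem : (0:ℝ) ∈ Set.Ioo (-(|τ|+1)) (|τ|+1) := by
      constructor <;> [nlinarith [abs_nonneg τ]; nlinarith [abs_nonneg τ]]
    have hτmem : τ ∈ Set.Ioo (-(|τ|+1)) (|τ|+1) := by
      constructor <;> [nlinarith [neg_abs_le τ]; nlinarith [le_abs_self τ]]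
    exact ODE_solution_unique_of_mem_Ioo (hv := fun t _ => hlip t) (ht := h0mem)
      (hf := fun t _ => ⟨hasDerivAt_exp_smul_const M t, Set.mem_univ _⟩)
      (hg := fun t _ => ⟨hderiv t, Set.mem_univ _⟩) (heq := heq0) hτmem
  have hgτ : gg τ = Matrix.fromBlocks (Dg n (cK K τ) 1) (Dg n (-K * sK K τ) 0)
      (Dg n (sK K τ) τ) (Dg n (cK K τ) 1) := by
    rw [hgg, hE1, hE2, hE3, hC0]
    simp only [Matrix.fromBlocks_smul, Matrix.fromBlocks_add, smul_Dg, smul_zero,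
      Dg_add, add_zero, zero_add, mul_one, mul_zero]
    rw [show sK K τ * -K = -K * sK K τ from mul_comm _ _]
  rw [flow, hsmul, hflow, hgτ]

lemma det_Dg (m : ℕ) (a b : ℝ) : (Dg (m + 1) a b).det = a ^ m * b := by
  simp only [Dg, Matrix.det_diagonal]
  rw [Fin.prod_univ_castSucc]
  simp [Fin.is_lt]

lemma sqrt_lt_pi {K : ℝ} (h1 : 0 < K) (hK : K < Real.pi ^ 2) : Real.sqrt K < Real.pi := by
  have := Real.sqrt_lt_sqrt h1.le hK
  rwa [Real.sqrt_sq Real.pi_nonneg] at this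

lemma sK_pos {K τ : ℝ} (hK : K < Real.pi ^ 2) (h0 : 0 < τ) (h1 : τ ≤ 1) : 0 < sK K τ := by
  rcases lt_trichotomy 0 K with hKp | hKz | hKn
  · have hs : 0 < Real.sqrt K := Real.sqrt_pos.mpr hKp
    have hlt : Real.sqrt K < Real.pi := sqrt_lt_pi hKp hK
    have harg0 : 0 < τ * Real.sqrt K := mul_pos h0 hs
    have harg : τ * Real.sqrt K < Real.pi := by nlinarith
    simp only [sK, if_pos hKp]
    exact div_pos (Real.sin_pos_of_pos_of_lt_pi harg0 harg) hs
  · have hK0 : K = 0 := hKz.symm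
    subst hK0
    simpa [sK] using h0
  · have hs : 0 < Real.sqrt (-K) := Real.sqrt_pos.mpr (by linarith)
    simp only [sK, if_neg (not_lt.mpr hKn.le), if_neg hKn.ne]
    exact div_pos (Real.sinh_pos_iff.mpr (mul_pos h0 hs)) hs

/-- Riemannian model distortion coefficients via LQ problems: for `A = 0`, `B = Iₙ` and
`Q = K·diag(I_{n−1},0)`, the Hamiltonian flow is explicit, `R₃(τ)` is invertible on
`(0,1]`, and the distortion coefficients `β_τ = det R₃(τ)/det R₃(1)` are the model
Riemannian coefficients. -/
theorem riemannian_model_distortion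
    {n : ℕ} (hn : 2 ≤ n) (K : ℝ) (hK : K < Real.pi ^ 2) :
    letI A : Matrix (Fin n) (Fin n) ℝ := 0
    letI B : Matrix (Fin n) (Fin n) ℝ := 1
    letI Qm : Matrix (Fin n) (Fin n) ℝ :=
      K • Matrix.diagonal (fun i : Fin n => if (i : ℕ) < n - 1 then (1:ℝ) else 0)
    (∀ τ : ℝ,
      R1 A Qm B τ =
        Matrix.diagonal (fun i : Fin n => if (i : ℕ) < n - 1 then cK K τ else 1) ∧
      R2 A Qm B τ =
        Matrix.diagonal (fun i : Fin n => if (i : ℕ) < n - 1 then -K * sK K τ else 0) ∧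
      R3 A Qm B τ =
        Matrix.diagonal (fun i : Fin n => if (i : ℕ) < n - 1 then sK K τ else τ) ∧
      R4 A Qm B τ =
        Matrix.diagonal (fun i : Fin n => if (i : ℕ) < n - 1 then cK K τ else 1)) ∧
    (∀ τ ∈ Set.Ioc (0:ℝ) 1, IsUnit (R3 A Qm B τ)) ∧
    (∀ τ ∈ Set.Icc (0:ℝ) 1,
      (R3 A Qm B τ).det / (R3 A Qm B 1).det =
        if 0 < K then
          τ * (Real.sin (τ * Real.sqrt K) / Real.sin (Real.sqrt K)) ^ (n - 1)
        else if K = 0 then τ ^ n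
        else τ * (Real.sinh (τ * Real.sqrt (-K)) / Real.sinh (Real.sqrt (-K))) ^ (n - 1)) := by
  have hflow := flow_eq_s17 (n := n) K
  have hR3 : ∀ τ : ℝ, R3 (0 : Matrix (Fin n) (Fin n) ℝ)
      (K • Matrix.diagonal (fun i : Fin n => if (i : ℕ) < n - 1 then (1:ℝ) else 0))
      (1 : Matrix (Fin n) (Fin n) ℝ) τ = Dg n (sK K τ) τ := by
    intro τ
    simp only [R3, hflow τ, Matrix.toBlocks_fromBlocks₂₁]
  obtain ⟨m', hnm⟩ : ∃ m', n = m' + 1 := ⟨n - 1, by omega⟩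
  have hdet : ∀ τ : ℝ, (R3 (0 : Matrix (Fin n) (Fin n) ℝ)
      (K • Matrix.diagonal (fun i : Fin n => if (i : ℕ) < n - 1 then (1:ℝ) else 0))
      (1 : Matrix (Fin n) (Fin n) ℝ) τ).det = sK K τ ^ (n - 1) * τ := by
    intro τ
    rw [hR3 τ]
    subst hnm
    rw [det_Dg]
    norm_num
  refine ⟨?_, ?_, ?_⟩
  · intro τ
    refine ⟨?_, ?_, ?_, ?_⟩ <;>
      simp only [R1, R2, R3, R4, hflow τ, Matrix.toBlocks_fromBlocks₁₁,
        Matrix.toBlocks_fromBlocks₁₂, Matrix.toBlocks_fromBlocks₂₁,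
        Matrix.toBlocks_fromBlocks₂₂, Dg]
  · intro τ hτ
    have hne : (R3 (0 : Matrix (Fin n) (Fin n) ℝ)
        (K • Matrix.diagonal (fun i : Fin n => if (i : ℕ) < n - 1 then (1:ℝ) else 0))
        (1 : Matrix (Fin n) (Fin n) ℝ) τ).det ≠ 0 := by
      rw [hdet τ]
      exact ne_of_gt (mul_pos (pow_pos (sK_pos hK hτ.1 hτ.2) _) hτ.1)
    exact (Matrix.isUnit_iff_isUnit_det _).mpr (isUnit_iff_ne_zero.mpr hne)
  · intro τ hτ
    rw [hdet τ, hdet 1]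
    have hm1 : n - 1 = m' := by omega
    split_ifs with h1 h2
    · have hs : 0 < Real.sqrt K := Real.sqrt_pos.mpr h1
      have hsin : 0 < Real.sin (Real.sqrt K) :=
        Real.sin_pos_of_pos_of_lt_pi hs (sqrt_lt_pi h1 hK)
      simp only [sK, if_pos h1, one_mul, mul_one]
      rw [mul_comm _ τ, mul_div_assoc, ← div_pow, div_div_div_cancel_right₀ hs.ne']
    · subst h2
      simp only [sK, lt_irrefl, if_neg (lt_irrefl (0:ℝ)), if_pos rfl, one_pow, mul_one, one_mul]
      simp only [if_false, if_true, one_pow, div_one, ← pow_succ]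
      congr 1
      omega
    · have hKn : K < 0 := lt_of_le_of_ne (not_lt.mp h1) h2
      have hs : 0 < Real.sqrt (-K) := Real.sqrt_pos.mpr (by linarith)
      have hsinh : 0 < Real.sinh (Real.sqrt (-K)) := Real.sinh_pos_iff.mpr hs
      simp only [sK, if_neg h1, if_neg h2, one_mul, mul_one]
      rw [mul_comm _ τ, mul_div_assoc, ← div_pow, div_div_div_cancel_right₀ hs.ne']


end LQ
end
end
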